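/- Let θ ≥ 1 and let d, d̂ be real numbers with σ(d̂) = q_θ(d), where σ(x) = 1/(1 + exp(−x)) and q_θ(d) = p_θ(d) + t_θ(d)/2. Then the signed BT win-probability difference matches the signed BTT win-probability difference: σ(d̂) − σ(−d̂) = p_θ(d) − p_θ(−d). -/
import Mathlib


open Real

noncomputable def pBTT (θ d : ℝ) : ℝ := 1 / (1 + θ * Real.exp (-d))

noncomputable def tBTT (θ d : ℝ) : ℝ :=
  (θ ^ 2 - 1) * Real.exp d / ((Real.exp d + θ) * (θ * Real.exp d + 1))

noncomputable def qBTT (θ d : ℝ) : ℝ := pBTT θ d + tBTT θ d / 2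

noncomputable def logistic (x : ℝ) : ℝ := 1 / (1 + Real.exp (-x))

lemma logistic_add (x : ℝ) : logistic x + logistic (-x) = 1 := by
  unfold logistic
  have h1 : 0 < 1 + Real.exp (-x) := by positivity
  have h2 : 0 < 1 + Real.exp (-(-x)) := by positivity
  rw [neg_neg] at h2 ⊢
  rw [Real.exp_neg]
  have h3 : 0 < Real.exp x := Real.exp_pos x
  field_simp
  ring

theorem signed_win_prob_diff_match (θ d dhat : ℝ) (hθ : 1 ≤ θ)
    (h : logistic dhat = qBTT θ d) :
    logistic dhat - logistic (-dhat) = pBTT θ d - pBTT θ (-d) := by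
  have hθ0 : 0 < θ := lt_of_lt_of_le one_pos hθ
  have he : 0 < Real.exp d := Real.exp_pos d
  have he' : 0 < Real.exp (-d) := Real.exp_pos (-d)
  have hA : 0 < 1 + θ * Real.exp (-d) := by positivity
  have hB : 0 < 1 + θ * Real.exp (-(-d)) := by positivity
  have hC : 0 < Real.exp d + θ := by positivity
  have hD : 0 < θ * Real.exp d + 1 := by positivity
  have hlog : logistic (-dhat) = 1 - logistic dhat := by
    have := logistic_add dhat; linarith
  rw [hlog, h]
  unfold qBTT pBTT tBTT
  rw [neg_neg] at hB ⊢
  rw [Real.exp_neg] at hA ⊢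
  field_simp
  ring
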